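/- The set Φ_{N,N} of pairs (α, ω) of monotone nondecreasing functions {1,…,N} → {0,1,…,N+1} with im(α) ⊆ [1, N+1], im(ω) ⊆ [0, N], and α(n) ≤ ω(n) + 1 for all n, has cardinality equal to the Narayana-type number T(2N+1, N+1) = (1/(2N+1))·binomial(2N+1, N+1)·binomial(2N+1, N). -/

import Mathlib

open Finset

namespace PhiNN

variable {n : ℕ}

/-- prefix count of true steps below `k`. -/
def cnt (s : Fin n → Bool) (k : ℕ) : ℕ :=
  (Finset.univ.filter fun i : Fin n => (i : ℕ) < k ∧ s i = true).card

lemma cnt_zero (s : Fin n → Bool) : cnt s 0 = 0 := by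
  simp [cnt]

lemma cnt_mono (s : Fin n → Bool) {k l : ℕ} (h : k ≤ l) : cnt s k ≤ cnt s l := by
  apply Finset.card_le_card
  intro i hi
  simp only [mem_filter] at *
  exact ⟨hi.1, lt_of_lt_of_le hi.2.1 h, hi.2.2⟩

lemma cnt_stable (s : Fin n → Bool) {k : ℕ} (h : n ≤ k) : cnt s k = cnt s n := by
  unfold cnt
  congr 1
  apply Finset.filter_congr
  intro i _
  have := i.isLt
  constructor <;> intro h' <;> exact ⟨by omega, h'.2⟩

lemma cnt_succ_le (s : Fin n → Bool) (k : ℕ) : cnt s (k + 1) ≤ cnt s k + 1 := by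
  unfold cnt
  have hsub : (Finset.univ.filter fun i : Fin n => (i : ℕ) < k + 1 ∧ s i = true) ⊆
      (Finset.univ.filter fun i : Fin n => (i : ℕ) < k ∧ s i = true) ∪
      (Finset.univ.filter fun i : Fin n => (i : ℕ) = k) := by
    intro i hi
    simp only [mem_filter, mem_union, mem_univ, true_and] at *
    rcases hi with ⟨h1, h2⟩
    by_cases hik : (i : ℕ) < k
    · exact Or.inl ⟨hik, h2⟩
    · exact Or.inr (by omega)
  refine le_trans (Finset.card_le_card hsub) ?_
  refine le_trans (Finset.card_union_le _ _) ?_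
  have : (Finset.univ.filter fun i : Fin n => (i : ℕ) = k).card ≤ 1 := by
    apply Finset.card_le_one.mpr
    intro a ha b hb
    simp only [mem_filter] at *
    exact Fin.ext (ha.2.trans hb.2.symm)
  omega

lemma cnt_split (u : Fin n → Bool) {m k : ℕ} (h : m ≤ k) :
    cnt u k = cnt u m +
      (Finset.univ.filter fun i : Fin n => m ≤ (i : ℕ) ∧ (i : ℕ) < k ∧ u i = true).card := by
  unfold cnt
  rw [← Finset.card_union_of_disjoint]
  · congr 1
    ext i
    simp only [mem_filter, mem_union, mem_univ, true_and]
    by_cases hu : u i = true <;> simp [hu] <;> omega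
  · rw [Finset.disjoint_left]
    intro i hi hi'
    simp only [mem_filter] at *
    omega

/-- swap tails at position `m`. -/
def sw (s t : Fin n → Bool) (m : ℕ) : Fin n → Bool :=
  fun i => if (i : ℕ) < m then s i else t i

lemma sw_sw (s t : Fin n → Bool) (m : ℕ) : sw (sw s t m) (sw t s m) m = s := by
  funext i
  unfold sw
  by_cases h : (i : ℕ) < m <;> simp [h]

lemma cnt_sw_le (s t : Fin n → Bool) {m k : ℕ} (h : k ≤ m) :
    cnt (sw s t m) k = cnt s k := by
  unfold cnt
  congr 1
  apply Finset.filter_congr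
  intro i _
  simp only [sw]
  constructor <;> intro h' <;> refine ⟨h'.1, ?_⟩
  · have hlt : (i : ℕ) < m := lt_of_lt_of_le h'.1 h
    simpa [hlt] using h'.2
  · have hlt : (i : ℕ) < m := lt_of_lt_of_le h'.1 h
    simpa [hlt] using h'.2

lemma cnt_sw_ge (s t : Fin n → Bool) {m k : ℕ} (h : m ≤ k) :
    cnt (sw s t m) k + cnt t m = cnt s m + cnt t k := by
  have h1 := cnt_split (sw s t m) h
  have h2 := cnt_split t h
  have e1 : cnt (sw s t m) m = cnt s m := cnt_sw_le s t le_rfl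
  have e2 : (Finset.univ.filter fun i : Fin n =>
        m ≤ (i : ℕ) ∧ (i : ℕ) < k ∧ sw s t m i = true) =
      (Finset.univ.filter fun i : Fin n => m ≤ (i : ℕ) ∧ (i : ℕ) < k ∧ t i = true) := by
    apply Finset.filter_congr
    intro i _
    simp only [sw]
    constructor <;> intro h' <;> refine ⟨h'.1, h'.2.1, ?_⟩
    · have : ¬ ((i : ℕ) < m) := by omega
      simpa [this] using h'.2.2
    · have : ¬ ((i : ℕ) < m) := by omega
      simpa [this] using h'.2.2
  rw [h1, h2, e1, e2]
  ring

lemma cnt_top (s : Fin n → Bool) :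
    cnt s n = (Finset.univ.filter fun i : Fin n => s i = true).card := by
  unfold cnt; congr 1; apply Finset.filter_congr; intro i _; simp [i.isLt]

lemma card_paths (m : ℕ) :
    Nat.card {s : Fin n → Bool // cnt s n = m} = n.choose m := by
  have e : {s : Fin n → Bool // cnt s n = m} ≃ {S : Finset (Fin n) // S.card = m} :=
    { toFun := fun s => ⟨Finset.univ.filter fun i => s.1 i = true, by
        rw [← cnt_top s.1]; exact s.2⟩
      invFun := fun S => ⟨fun i => decide (i ∈ S.1), by
        rw [cnt_top]
        have : (Finset.univ.filter fun i : Fin n => decide (i ∈ S.1) = true) = S.1 := by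
          ext i; simp
        rw [this, S.2]⟩
      left_inv := fun s => by
        ext i
        simp
      right_inv := fun S => by
        ext i
        simp }
  rw [Nat.card_congr e, Nat.card_eq_fintype_card, Fintype.card_finset_len, Fintype.card_fin]

section StrictMono

variable {N : ℕ}

lemma sm_le {f : Fin N → ℕ} (hf : StrictMono f) :
    ∀ (v : ℕ) (h : v < N), v ≤ f ⟨v, h⟩ := by
  intro v
  induction v with
  | zero => intro h; exact Nat.zero_le _
  | succ w ih =>
    intro h
    have hw : w < N := by omega
    have h1 := hf (show (⟨w, hw⟩ : Fin N) < ⟨w + 1, h⟩ by simp [Fin.lt_def])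
    have h2 := ih hw
    omega

lemma sm_add {f : Fin N → ℕ} (hf : StrictMono f) :
    ∀ (d v : ℕ) (h : v + d < N), f ⟨v, by omega⟩ + d ≤ f ⟨v + d, h⟩ := by
  intro d
  induction d with
  | zero => intro v h; simp
  | succ e ih =>
    intro v h
    have he : v + e < N := by omega
    have h1 := ih v he
    have h2 := hf (show (⟨v + e, he⟩ : Fin N) < ⟨v + (e + 1), h⟩ by simp [Fin.lt_def])
    omega

lemma sm_diff {f : Fin N → ℕ} (hf : StrictMono f) {j j' : Fin N} (h : j ≤ j') :
    f j + ((j' : ℕ) - (j : ℕ)) ≤ f j' := by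
  have hval : (j : ℕ) ≤ (j' : ℕ) := h
  have h2 : (j : ℕ) + ((j' : ℕ) - (j : ℕ)) < N := by
    have := j'.isLt; omega
  have := sm_add hf ((j' : ℕ) - (j : ℕ)) (j : ℕ) h2
  have e1 : (⟨(j : ℕ), by omega⟩ : Fin N) = j := by ext; rfl
  have e2 : (⟨(j : ℕ) + ((j' : ℕ) - (j : ℕ)), h2⟩ : Fin N) = j' := by ext; simp; omega
  rwa [e1, e2] at this

def toSteps (a : Fin N → ℕ) : Fin (2 * N) → Bool :=
  fun i => decide (∃ j : Fin N, a j + (j : ℕ) = (i : ℕ))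

lemma toSteps_sm {a : Fin N → ℕ} (ha : Monotone a) :
    StrictMono (fun j : Fin N => a j + (j : ℕ)) := by
  intro j j' h
  have h1 : a j ≤ a j' := ha h.le
  have h2 : (j : ℕ) < (j' : ℕ) := h
  show a j + (j : ℕ) < a j' + (j' : ℕ)
  omega

lemma cnt_toSteps {a : Fin N → ℕ} (ha : Monotone a) (hbd : ∀ j, a j ≤ N) (k : ℕ) :
    cnt (toSteps a) k = (Finset.univ.filter fun j : Fin N => a j + (j : ℕ) < k).card := by
  unfold cnt
  symm
  apply Finset.card_bij (fun (j : Fin N) _ =>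
    (⟨a j + (j : ℕ), by have := j.isLt; have := hbd j; omega⟩ : Fin (2 * N)))
  · intro j hj
    simp only [mem_filter, mem_univ, true_and] at *
    exact ⟨hj, by simp [toSteps]⟩
  · intro j1 h1 j2 h2 he
    have : a j1 + (j1 : ℕ) = a j2 + (j2 : ℕ) := by
      simpa [Fin.mk.injEq] using he
    exact (toSteps_sm ha).injective this
  · intro i hi
    simp only [mem_filter, mem_univ, true_and, toSteps, decide_eq_true_eq] at hi
    obtain ⟨hik, j, hj⟩ := hi
    exact ⟨j, by simp [mem_filter, hj, hik], by ext; simpa using hj⟩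

lemma cnt_toSteps_total {a : Fin N → ℕ} (ha : Monotone a) (hbd : ∀ j, a j ≤ N) :
    cnt (toSteps a) (2 * N) = N := by
  rw [cnt_toSteps ha hbd]
  rw [Finset.filter_true_of_mem]
  · simp
  · intro j _
    have := j.isLt; have := hbd j; omega

lemma toSteps_inj {a a' : Fin N → ℕ} (ha : Monotone a) (ha' : Monotone a')
    (hbd : ∀ j, a j ≤ N) (hbd' : ∀ j, a' j ≤ N)
    (h : toSteps a = toSteps a') : a = a' := by
  have hr : Set.range (fun j : Fin N => a j + (j : ℕ)) =
      Set.range (fun j : Fin N => a' j + (j : ℕ)) := by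
    ext x
    simp only [Set.mem_range]
    constructor
    · rintro ⟨j, rfl⟩
      have hx : a j + (j : ℕ) < 2 * N := by have := j.isLt; have := hbd j; omega
      have := congrFun h ⟨a j + (j : ℕ), hx⟩
      simp only [toSteps, decide_eq_decide] at this
      exact this.mp ⟨j, rfl⟩
    · rintro ⟨j, rfl⟩
      have hx : a' j + (j : ℕ) < 2 * N := by have := j.isLt; have := hbd' j; omega
      have := congrFun h ⟨a' j + (j : ℕ), hx⟩
      simp only [toSteps, decide_eq_decide] at this
      obtain ⟨j', hj'⟩ := this.mpr ⟨j, rfl⟩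
      exact ⟨j', hj'⟩
  haveI : WellFoundedLT (Fin N) := inferInstance
  have := ((toSteps_sm ha).range_inj (toSteps_sm ha')).mp hr
  funext j
  have := congrFun this j
  omega

lemma toSteps_surj (s : Fin (2 * N) → Bool) (hs : cnt s (2 * N) = N) :
    ∃ a : Fin N → ℕ, Monotone a ∧ (∀ j, a j ≤ N) ∧ toSteps a = s := by
  classical
  set S : Finset (Fin (2 * N)) := Finset.univ.filter fun i => s i = true with hSdef
  have hS : S.card = N := by rw [← cnt_top s]; exact hs
  set g : Fin N → ℕ := fun j => ((S.orderEmbOfFin hS j : Fin (2 * N)) : ℕ) with hgdef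
  have hg : StrictMono g := by
    intro j j' h
    exact (S.orderEmbOfFin hS).strictMono h
  have hlow : ∀ j : Fin N, (j : ℕ) ≤ g j := by
    intro j
    have := sm_le hg (j : ℕ) j.isLt
    simpa using this
  have hupp : ∀ j : Fin N, g j ≤ N + (j : ℕ) := by
    intro j
    have hN : 0 < N := j.pos
    have hlast : (j : ℕ) + (N - 1 - (j : ℕ)) < N := by have := j.isLt; omega
    have h1 := sm_add hg (N - 1 - (j : ℕ)) (j : ℕ) hlast
    have e1 : (⟨(j : ℕ), by omega⟩ : Fin N) = j := by ext; rfl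
    rw [e1] at h1
    have h2 : g ⟨(j : ℕ) + (N - 1 - (j : ℕ)), hlast⟩ < 2 * N :=
      (S.orderEmbOfFin hS _).isLt
    have := j.isLt
    omega
  refine ⟨fun j => g j - (j : ℕ), ?_, ?_, ?_⟩
  · intro j j' h
    have h1 := sm_diff hg h
    have h2 := hlow j
    have h3 : (j : ℕ) ≤ (j' : ℕ) := h
    show g j - (j : ℕ) ≤ g j' - (j' : ℕ)
    omega
  · intro j
    have h1 := hupp j
    show g j - (j : ℕ) ≤ N
    omega
  · funext i
    have hiff : (∃ j : Fin N, (g j - (j : ℕ)) + (j : ℕ) = (i : ℕ)) ↔ s i = true := by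
      constructor
      · rintro ⟨j, hj⟩
        have h1 := hlow j
        have h2 : g j = (i : ℕ) := by omega
        have h3 : S.orderEmbOfFin hS j = i := by ext; exact h2
        have : (i : Fin (2 * N)) ∈ S := h3 ▸ Finset.orderEmbOfFin_mem S hS j
        simpa [hSdef] using this
      · intro hsi
        have hiS : i ∈ S := by simp [hSdef, hsi]
        have : i ∈ Set.range (S.orderEmbOfFin hS) := by
          rw [Finset.range_orderEmbOfFin]; exact hiS
        obtain ⟨j, hj⟩ := this
        refine ⟨j, ?_⟩
        have h1 := hlow j
        have h2 : g j = (i : ℕ) := by rw [hgdef]; simp [hj]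
        omega
    simp only [toSteps]
    cases hsi : s i with
    | true => exact decide_eq_true (hiff.mpr hsi)
    | false =>
      refine decide_eq_false fun hP => ?_
      have := hiff.mp hP
      rw [this] at hsi
      cases hsi

lemma dominance {a w : Fin N → ℕ} (ha : Monotone a) (hw : Monotone w)
    (hba : ∀ j, a j ≤ N) (hbw : ∀ j, w j ≤ N) :
    (∀ j, a j ≤ w j) ↔ ∀ k, cnt (toSteps w) k ≤ cnt (toSteps a) k := by
  constructor
  · intro hle k
    rw [cnt_toSteps ha hba, cnt_toSteps hw hbw]
    apply Finset.card_le_card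
    intro j hj
    simp only [mem_filter, mem_univ, true_and] at *
    have := hle j
    omega
  · intro hcnt
    by_contra hcon
    push_neg at hcon
    obtain ⟨i, hi⟩ := hcon
    have hk := hcnt (w i + (i : ℕ) + 1)
    rw [cnt_toSteps ha hba, cnt_toSteps hw hbw] at hk
    have h1 : (Finset.Iic i) ⊆
        (Finset.univ.filter fun j : Fin N => w j + (j : ℕ) < w i + (i : ℕ) + 1) := by
      intro j hj
      simp only [Finset.mem_Iic] at hj
      simp only [mem_filter, mem_univ, true_and]
      have h2 : w j ≤ w i := hw hj
      have h3 : (j : ℕ) ≤ (i : ℕ) := hj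
      omega
    have h2 : (Finset.univ.filter fun j : Fin N => a j + (j : ℕ) < w i + (i : ℕ) + 1) ⊆
        Finset.Iio i := by
      intro j hj
      simp only [mem_filter, mem_univ, true_and] at hj
      simp only [Finset.mem_Iio]
      by_contra hc
      push_neg at hc
      have h4 : a i ≤ a j := ha hc
      have h5 : (i : ℕ) ≤ (j : ℕ) := hc
      omega
    have c1 := Finset.card_le_card h1
    have c2 := Finset.card_le_card h2
    rw [Fin.card_Iic] at c1
    rw [Fin.card_Iio] at c2
    omega

end StrictMono

section Reflection

variable {N : ℕ}

/-- last crossing point for a bad pair -/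
def crossB (s t : Fin n → Bool) : ℕ :=
  Nat.findGreatest (fun k => cnt s k < cnt t k) n

/-- last touching point for a target pair -/
def crossT (u v : Fin n → Bool) : ℕ :=
  Nat.findGreatest (fun k => cnt v k ≤ cnt u k + 1) n

lemma badK_spec {s t : Fin n → Bool} (hs : cnt s n = N) (ht : cnt t n = N)
    (hbad : ∃ k, cnt s k < cnt t k) :
    crossB s t < n ∧ cnt t (crossB s t) = cnt s (crossB s t) + 1 ∧
      ∀ k, crossB s t < k → ¬(cnt s k < cnt t k) := by
  classical
  obtain ⟨k, hk⟩ := hbad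
  have hkn : k ≤ n := by
    by_contra hc
    push_neg at hc
    rw [cnt_stable s hc.le, cnt_stable t hc.le, hs, ht] at hk
    omega
  have hPK : cnt s (crossB s t) < cnt t (crossB s t) :=
    Nat.findGreatest_spec (P := fun k => cnt s k < cnt t k) hkn hk
  have hKn : crossB s t ≤ n := Nat.findGreatest_le (P := fun k => cnt s k < cnt t k) n
  have hlt : crossB s t < n := by
    rcases lt_or_eq_of_le hKn with h | h
    · exact h
    · rw [h, hs, ht] at hPK; omega
  have hgr : ∀ m, crossB s t < m → m ≤ n → ¬(cnt s m < cnt t m) := by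
    intro m h1 h2
    exact Nat.findGreatest_is_greatest (P := fun k => cnt s k < cnt t k) h1 h2
  refine ⟨hlt, ?_, ?_⟩
  · have h1 : ¬(cnt s (crossB s t + 1) < cnt t (crossB s t + 1)) :=
      hgr _ (Nat.lt_succ_self _) hlt
    have h2 := cnt_succ_le s (crossB s t)
    have h3 := cnt_mono t (show crossB s t ≤ crossB s t + 1 by omega)
    omega
  · intro k' hk'
    by_cases h : k' ≤ n
    · exact hgr k' hk' h
    · push_neg at h
      rw [cnt_stable s h.le, cnt_stable t h.le, hs, ht]
      omega

lemma tgtK_spec {u v : Fin n → Bool} (hu : cnt u n + 1 = N) (hv : cnt v n = N + 1) :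
    crossT u v < n ∧ cnt v (crossT u v) = cnt u (crossT u v) + 1 ∧
      ∀ k, crossT u v < k → ¬(cnt v k ≤ cnt u k + 1) := by
  classical
  have h0 : cnt v 0 ≤ cnt u 0 + 1 := by rw [cnt_zero, cnt_zero]; omega
  have hPK : cnt v (crossT u v) ≤ cnt u (crossT u v) + 1 :=
    Nat.findGreatest_spec (P := fun k => cnt v k ≤ cnt u k + 1) (Nat.zero_le n) h0
  have hKn : crossT u v ≤ n := Nat.findGreatest_le (P := fun k => cnt v k ≤ cnt u k + 1) n
  have hlt : crossT u v < n := by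
    rcases lt_or_eq_of_le hKn with h | h
    · exact h
    · rw [h, hv] at hPK
      omega
  have hgr : ∀ m, crossT u v < m → m ≤ n → ¬(cnt v m ≤ cnt u m + 1) := by
    intro m h1 h2
    exact Nat.findGreatest_is_greatest (P := fun k => cnt v k ≤ cnt u k + 1) h1 h2
  refine ⟨hlt, ?_, ?_⟩
  · have h1 : ¬(cnt v (crossT u v + 1) ≤ cnt u (crossT u v + 1) + 1) :=
      hgr _ (Nat.lt_succ_self _) hlt
    have h2 := cnt_succ_le v (crossT u v)
    have h3 := cnt_mono u (show crossT u v ≤ crossT u v + 1 by omega)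
    omega
  · intro k' hk'
    by_cases h : k' ≤ n
    · exact hgr k' hk' h
    · push_neg at h
      rw [cnt_stable v h.le, cnt_stable u h.le, hv]
      omega

def AllT (n N : ℕ) := {p : (Fin n → Bool) × (Fin n → Bool) //
  cnt p.1 n = N ∧ cnt p.2 n = N}

def GoodT (n N : ℕ) := {p : (Fin n → Bool) × (Fin n → Bool) //
  (cnt p.1 n = N ∧ cnt p.2 n = N) ∧ ∀ k, cnt p.2 k ≤ cnt p.1 k}

def BadT (n N : ℕ) := {p : (Fin n → Bool) × (Fin n → Bool) //
  (cnt p.1 n = N ∧ cnt p.2 n = N) ∧ ∃ k, cnt p.1 k < cnt p.2 k}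

def TgtT (n N : ℕ) := {p : (Fin n → Bool) × (Fin n → Bool) //
  cnt p.1 n + 1 = N ∧ cnt p.2 n = N + 1}

set_option maxHeartbeats 1000000 in
noncomputable def badEquiv {n N : ℕ} : BadT n N ≃ TgtT n N where
  toFun p := ⟨(sw p.1.1 p.1.2 (crossB p.1.1 p.1.2), sw p.1.2 p.1.1 (crossB p.1.1 p.1.2)), by
    obtain ⟨⟨hs, ht⟩, hbad⟩ := p.2
    obtain ⟨hlt, heq, hgr⟩ := badK_spec hs ht hbad
    dsimp only
    constructor
    · have h1 := cnt_sw_ge p.1.1 p.1.2 (m := crossB p.1.1 p.1.2) (k := n) hlt.le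
      omega
    · have h1 := cnt_sw_ge p.1.2 p.1.1 (m := crossB p.1.1 p.1.2) (k := n) hlt.le
      omega⟩
  invFun q := ⟨(sw q.1.1 q.1.2 (crossT q.1.1 q.1.2), sw q.1.2 q.1.1 (crossT q.1.1 q.1.2)), by
    obtain ⟨hu, hv⟩ := q.2
    obtain ⟨hlt, heq, hgr⟩ := tgtK_spec hu hv
    dsimp only
    refine ⟨⟨?_, ?_⟩, ⟨crossT q.1.1 q.1.2, ?_⟩⟩
    · have h1 := cnt_sw_ge q.1.1 q.1.2 (m := crossT q.1.1 q.1.2) (k := n) hlt.le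
      omega
    · have h1 := cnt_sw_ge q.1.2 q.1.1 (m := crossT q.1.1 q.1.2) (k := n) hlt.le
      omega
    · rw [cnt_sw_le q.1.1 q.1.2 le_rfl, cnt_sw_le q.1.2 q.1.1 le_rfl]
      omega⟩
  left_inv p := by
    classical
    obtain ⟨⟨s, t⟩, hp⟩ := p
    obtain ⟨⟨hs, ht⟩, hbad⟩ := hp
    dsimp only at hs ht hbad ⊢
    obtain ⟨hlt, heq, hgr⟩ := badK_spec hs ht hbad
    set K := crossB s t with hK
    have hcross : crossT (sw s t K) (sw t s K) = K := by
      rw [crossT, Nat.findGreatest_eq_iff]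
      refine ⟨hlt.le, ?_, ?_⟩
      · intro _
        rw [cnt_sw_le s t le_rfl, cnt_sw_le t s le_rfl]
        omega
      · intro m h1 h2 hP
        have e1 := cnt_sw_ge s t (m := K) (k := m) h1.le
        have e2 := cnt_sw_ge t s (m := K) (k := m) h1.le
        have h3 := hgr m h1
        omega
    refine Subtype.ext ?_
    dsimp only
    rw [hcross]
    exact Prod.ext (sw_sw s t K) (sw_sw t s K)
  right_inv q := by
    classical
    obtain ⟨⟨u, v⟩, hq⟩ := q
    obtain ⟨hu, hv⟩ := hq
    dsimp only at hu hv ⊢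
    obtain ⟨hlt, heq, hgr⟩ := tgtK_spec hu hv
    set K := crossT u v with hK
    have hcross : crossB (sw u v K) (sw v u K) = K := by
      rw [crossB, Nat.findGreatest_eq_iff]
      refine ⟨hlt.le, ?_, ?_⟩
      · intro _
        rw [cnt_sw_le u v le_rfl, cnt_sw_le v u le_rfl]
        omega
      · intro m h1 h2 hP
        have e1 := cnt_sw_ge u v (m := K) (k := m) h1.le
        have e2 := cnt_sw_ge v u (m := K) (k := m) h1.le
        have h3 := hgr m h1
        omega
    refine Subtype.ext ?_
    dsimp only
    rw [hcross]
    exact Prod.ext (sw_sw u v K) (sw_sw v u K)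

instance : Finite (AllT n N) := Subtype.finite
instance : Finite (GoodT n N) := Subtype.finite
instance : Finite (BadT n N) := Subtype.finite

lemma card_allT : Nat.card (AllT n N) = n.choose N * n.choose N := by
  have e : AllT n N ≃
      {s : Fin n → Bool // cnt s n = N} × {t : Fin n → Bool // cnt t n = N} := by
    unfold AllT
    exact Equiv.subtypeProdEquivProd (p := fun s : Fin n → Bool => cnt s n = N)
      (q := fun t : Fin n → Bool => cnt t n = N)
  rw [Nat.card_congr e, Nat.card_prod, card_paths]

lemma card_tgtT : Nat.card (TgtT n (N + 1)) = n.choose N * n.choose (N + 2) := by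
  have e : TgtT n (N + 1) ≃
      {s : Fin n → Bool // cnt s n = N} × {t : Fin n → Bool // cnt t n = N + 2} := by
    unfold TgtT
    refine Equiv.trans (Equiv.subtypeEquivRight fun p => ?_)
      (Equiv.subtypeProdEquivProd (p := fun s : Fin n → Bool => cnt s n = N)
        (q := fun t : Fin n → Bool => cnt t n = N + 2))
    constructor
    · rintro ⟨h1, h2⟩; exact ⟨by omega, h2⟩
    · rintro ⟨h1, h2⟩; exact ⟨by omega, h2⟩
  rw [Nat.card_congr e, Nat.card_prod, card_paths, card_paths]

lemma card_split :
    Nat.card (AllT n N) = Nat.card (GoodT n N) + Nat.card (BadT n N) := by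
  classical
  have e1 : {x : AllT n N // ∀ k, cnt x.1.2 k ≤ cnt x.1.1 k} ≃ GoodT n N := by
    unfold AllT GoodT
    exact Equiv.subtypeSubtypeEquivSubtypeInter
      (fun p : (Fin n → Bool) × (Fin n → Bool) => cnt p.1 n = N ∧ cnt p.2 n = N)
      (fun p => ∀ k, cnt p.2 k ≤ cnt p.1 k)
  have e2 : {x : AllT n N // ¬ ∀ k, cnt x.1.2 k ≤ cnt x.1.1 k} ≃ BadT n N := by
    unfold AllT BadT
    refine Equiv.trans (Equiv.subtypeEquivRight fun x => ?_)
      (Equiv.subtypeSubtypeEquivSubtypeInter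
        (fun p : (Fin n → Bool) × (Fin n → Bool) => cnt p.1 n = N ∧ cnt p.2 n = N)
        (fun p => ∃ k, cnt p.1 k < cnt p.2 k))
    push_neg
    rfl
  have e3 := (Equiv.sumCompl (fun x : AllT n N => ∀ k, cnt x.1.2 k ≤ cnt x.1.1 k))
  rw [← Nat.card_congr e3, Nat.card_sum, Nat.card_congr e1, Nat.card_congr e2]

end Reflection

end PhiNN

open PhiNN in
/-- The number of pairs `(α, ω)` of monotone nondecreasing functions
`{1,…,N} → {0,…,N+1}` with `im α ⊆ [1, N+1]`, `im ω ⊆ [0, N]` and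
`α ≤ ω + 1` is the Narayana-type number
`T(2N+1, N+1) = (1/(2N+1))·C(2N+1, N+1)·C(2N+1, N)`. -/
theorem card_PhiNN (N : ℕ) :
    Nat.card {p : (Fin N → Fin (N + 2)) × (Fin N → Fin (N + 2)) //
        (∀ a b, a ≤ b → p.1 a ≤ p.1 b) ∧ (∀ a b, a ≤ b → p.2 a ≤ p.2 b) ∧
        (∀ n, 1 ≤ (p.1 n : ℕ)) ∧ (∀ n, (p.2 n : ℕ) ≤ N) ∧
        (∀ n, (p.1 n : ℕ) ≤ (p.2 n : ℕ) + 1)}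
      = Nat.choose (2 * N + 1) (N + 1) * Nat.choose (2 * N + 1) N / (2 * N + 1) := by
  classical
  -- Step 1: the set is in bijection with `GoodT (2*N) N`.
  have hcard : Nat.card {p : (Fin N → Fin (N + 2)) × (Fin N → Fin (N + 2)) //
        (∀ a b, a ≤ b → p.1 a ≤ p.1 b) ∧ (∀ a b, a ≤ b → p.2 a ≤ p.2 b) ∧
        (∀ n, 1 ≤ (p.1 n : ℕ)) ∧ (∀ n, (p.2 n : ℕ) ≤ N) ∧
        (∀ n, (p.1 n : ℕ) ≤ (p.2 n : ℕ) + 1)}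
      = Nat.card (GoodT (2 * N) N) := by
    have hma : ∀ (α : Fin N → Fin (N + 2)), (∀ a b, a ≤ b → α a ≤ α b) →
        Monotone fun j => (α j : ℕ) - 1 := by
      intro α h1 a b hab
      have h2 : (α a : ℕ) ≤ (α b : ℕ) := h1 a b hab
      show (α a : ℕ) - 1 ≤ (α b : ℕ) - 1
      omega
    have hba : ∀ (α : Fin N → Fin (N + 2)) (j : Fin N), ((α j : ℕ) - 1) ≤ N := by
      intro α j
      have := (α j).isLt
      omega
    apply Nat.card_congr
    refine Equiv.ofBijective (fun p => ⟨(toSteps fun j => (p.1.1 j : ℕ) - 1,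
        toSteps fun j => (p.1.2 j : ℕ)), ?_⟩) ⟨?_, ?_⟩
    · obtain ⟨⟨α, ω⟩, h1, h2, h3, h4, h5⟩ := p
      dsimp only at h1 h2 h3 h4 h5 ⊢
      have hmw : Monotone fun j => (ω j : ℕ) := fun a b hab => h2 a b hab
      refine ⟨⟨cnt_toSteps_total (hma α h1) (hba α), cnt_toSteps_total hmw h4⟩, ?_⟩
      refine (dominance (hma α h1) hmw (hba α) h4).mp ?_
      intro j
      have := h5 j
      have := h3 j
      show (α j : ℕ) - 1 ≤ (ω j : ℕ)
      omega
    · rintro ⟨⟨α, ω⟩, h1, h2, h3, h4, h5⟩ ⟨⟨α', ω'⟩, h1', h2', h3', h4', h5'⟩ he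
      dsimp only at h1 h2 h3 h4 h5 h1' h2' h3' h4' h5'
      have hv := congrArg Subtype.val he
      dsimp only at hv
      rw [Prod.mk.injEq] at hv
      have hmw : Monotone fun j => (ω j : ℕ) := fun a b hab => h2 a b hab
      have hmw' : Monotone fun j => (ω' j : ℕ) := fun a b hab => h2' a b hab
      have ha := toSteps_inj (hma α h1) (hma α' h1') (hba α) (hba α') hv.1
      have hw := toSteps_inj hmw hmw' h4 h4' hv.2
      refine Subtype.ext ?_
      rw [Prod.mk.injEq]
      constructor
      · funext j
        have hj := congrFun ha j
        have := h3 j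
        have := h3' j
        apply Fin.ext
        omega
      · funext j
        have hj := congrFun hw j
        exact Fin.ext hj
    · rintro ⟨⟨s, t⟩, ⟨hs, ht⟩, hdom⟩
      obtain ⟨a, hmas, hbas, hta⟩ := toSteps_surj s hs
      obtain ⟨w, hmws, hbws, htw⟩ := toSteps_surj t ht
      have hdm : ∀ j, a j ≤ w j := by
        refine (dominance hmas hmws hbas hbws).mpr ?_
        rw [hta, htw]
        exact hdom
      refine ⟨⟨(fun j => ⟨a j + 1, by have := hbas j; omega⟩,
          fun j => ⟨w j, by have := hbws j; omega⟩), ?_, ?_, ?_, ?_, ?_⟩, ?_⟩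
      · intro u v huv
        simp only [Fin.mk_le_mk]
        have : a u ≤ a v := hmas huv
        omega
      · intro u v huv
        simp only [Fin.mk_le_mk]
        exact hmws huv
      · intro j
        simp
      · intro j
        exact hbws j
      · intro j
        simp only
        have := hdm j
        omega
      · refine Subtype.ext ?_
        dsimp only
        rw [Prod.mk.injEq]
        constructor
        · have hfun : (fun j => ((⟨a j + 1, by have := hbas j; omega⟩ : Fin (N + 2)) : ℕ) - 1)
              = a := by
            funext j
            simp
          rw [hfun, hta]
        · have hfun : (fun j => ((⟨w j, by have := hbws j; omega⟩ : Fin (N + 2)) : ℕ)) = w := by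
            funext j
            simp
          rw [hfun, htw]
  rw [hcard]
  rcases N with _ | M
  · -- N = 0
    have hempty : IsEmpty (BadT (2 * 0) 0) := by
      constructor
      rintro ⟨⟨s, t⟩, ⟨hs, ht⟩, k, hk⟩
      dsimp only at hs ht hk
      have h1 : cnt t k ≤ 0 := by
        by_cases h : k ≤ 2 * 0
        · have := cnt_mono t h; omega
        · push_neg at h; rw [cnt_stable t h.le]; omega
      omega
    have hsplit := card_split (n := 2 * 0) (N := 0)
    have hall := card_allT (n := 2 * 0) (N := 0)
    have hbad : Nat.card (BadT (2 * 0) 0) = 0 := Nat.card_of_isEmpty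
    norm_num [Nat.choose_self, Nat.choose_zero_right] at hall hsplit hbad ⊢
    omega
  · -- N = M + 1
    have hsplit := card_split (n := 2 * (M + 1)) (N := M + 1)
    have hall := card_allT (n := 2 * (M + 1)) (N := M + 1)
    have hbadE : Nat.card (BadT (2 * (M + 1)) (M + 1))
        = (2 * (M + 1)).choose M * (2 * (M + 1)).choose (M + 2) := by
      rw [Nat.card_congr (badEquiv (n := 2 * (M + 1)) (N := M + 1))]
      exact card_tgtT
    set n2 := 2 * (M + 1) with hn2
    set x := n2.choose (M + 1) with hx
    set z := n2.choose M with hzdef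
    set y := n2.choose (M + 2) with hydef
    have hyz : y = z := by
      rw [hydef, hzdef]
      have h1 := Nat.choose_symm (show M + 2 ≤ n2 by omega)
      have h2 : n2 - (M + 2) = M := by omega
      rw [h2] at h1
      exact h1.symm
    have hkey : x * (M + 1) = z * (M + 2) := by
      rw [hx, hzdef]
      have h1 := Nat.choose_succ_right_eq n2 M
      have h2 : n2 - M = M + 2 := by omega
      rw [h2] at h1
      exact h1
    have hzx : z ≤ x := by
      have h1 : z * (M + 1) ≤ x * (M + 1) := by
        rw [hkey]
        exact Nat.mul_le_mul le_rfl (by omega)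
      exact Nat.le_of_mul_le_mul_right h1 (by omega)
    obtain ⟨d, hd⟩ : ∃ d, x = z + d := ⟨x - z, by omega⟩
    rw [hd] at hkey
    have hz2 : z = (M + 1) * d := by
      have e1 : (z + d) * (M + 1) = z * (M + 1) + d * (M + 1) := by ring
      have e2 : z * (M + 2) = z * (M + 1) + z := by ring
      have e3 : d * (M + 1) = (M + 1) * d := by ring
      omega
    have hx2 : x = (M + 2) * d := by
      have e1 : (M + 2) * d = (M + 1) * d + d := by ring
      omega
    have hgood : Nat.card (GoodT n2 (M + 1)) = (2 * M + 3) * (d * d) := by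
      have e4 : (M + 2) * d * ((M + 2) * d)
          = (M + 1) * d * ((M + 1) * d) + (2 * M + 3) * (d * d) := by ring
      have hxx : x * x = (M + 2) * d * ((M + 2) * d) := by rw [hx2]
      have hzz : z * y = (M + 1) * d * ((M + 1) * d) := by rw [hyz, hz2]
      omega
    have hP1 : Nat.choose (n2 + 1) (M + 1 + 1) = x + y := by
      rw [hx, hydef, hn2]
      exact Nat.choose_succ_succ (2 * (M + 1)) (M + 1)
    have hP2 : Nat.choose (n2 + 1) (M + 1) = z + x := by
      rw [hx, hzdef, hn2]
      exact Nat.choose_succ_succ (2 * (M + 1)) M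
    have hRHS : (x + y) * (z + x) = (n2 + 1) * ((2 * M + 3) * (d * d)) := by
      rw [hyz, hx2, hz2, hn2]
      ring
    rw [hgood, hP1, hP2, hRHS, Nat.mul_div_cancel_left _ (show 0 < n2 + 1 by omega)]
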